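/- Let Z be a finite set, Q₀ a pmf on Z with Q₀(z) > 0 for all z, and let P̃ᴬ and Pᴮ be pmfs on Z. For (μ₁,μ₂) ∈ ℝ² define f(μ₁,μ₂) = D((1−μ₁)(1−μ₂)·Q₀ + (1−μ₁)·μ₂·P̃ᴬ + μ₁·Pᴮ ‖ Q₀), where the divergence is the finite sum ∑_z p(z)·(Real.log(p(z)) − Real.log(Q₀(z))) applied to p = (1−μ₁)(1−μ₂)·Q₀ + (1−μ₁)·μ₂·P̃ᴬ + μ₁·Pᴮ. Then the mixed second partial derivative of f at the origin, namely deriv (fun μ₂ => deriv (fun μ₁ => f(μ₁,μ₂)) 0) at μ₂ = 0, equals ∑_{z∈Z} (P̃ᴬ(z) − Q₀(z))·(Pᴮ(z) − Q₀(z))/Q₀(z). -/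

import Mathlib

open Real

theorem stmt_5 {Z : Type*} [Fintype Z]
    (Q₀ PtA PB : Z → ℝ)
    (hQ0pos : ∀ z, 0 < Q₀ z) (hQ0sum : ∑ z, Q₀ z = 1)
    (hPtA0 : ∀ z, 0 ≤ PtA z) (hPtA1 : ∑ z, PtA z = 1)
    (hPB0 : ∀ z, 0 ≤ PB z) (hPB1 : ∑ z, PB z = 1)
    (f : ℝ → ℝ → ℝ)
    (hf : ∀ μ₁ μ₂, f μ₁ μ₂ = ∑ z,
      ((1 - μ₁) * (1 - μ₂) * Q₀ z + (1 - μ₁) * μ₂ * PtA z + μ₁ * PB z) *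
        (Real.log ((1 - μ₁) * (1 - μ₂) * Q₀ z + (1 - μ₁) * μ₂ * PtA z + μ₁ * PB z)
          - Real.log (Q₀ z))) :
    deriv (fun μ₂ => deriv (fun μ₁ => f μ₁ μ₂) 0) 0
      = ∑ z, (PtA z - Q₀ z) * (PB z - Q₀ z) / Q₀ z := by
  -- the inner derivative, valid whenever the intermediate pmf is positive
  have inner : ∀ μ₂ : ℝ, (∀ z, 0 < (1 - μ₂) * Q₀ z + μ₂ * PtA z) →
      deriv (fun μ₁ => f μ₁ μ₂) 0
        = ∑ z, (PB z - ((1 - μ₂) * Q₀ z + μ₂ * PtA z)) *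
            (Real.log ((1 - μ₂) * Q₀ z + μ₂ * PtA z) - Real.log (Q₀ z) + 1) := by
    intro μ₂ hq
    have hderiv : HasDerivAt (fun μ₁ => f μ₁ μ₂)
        (∑ z, (PB z - ((1 - μ₂) * Q₀ z + μ₂ * PtA z)) *
            (Real.log ((1 - μ₂) * Q₀ z + μ₂ * PtA z) - Real.log (Q₀ z) + 1)) 0 := by
      have hfun : (fun μ₁ => f μ₁ μ₂) = fun μ₁ => ∑ z,
          ((1 - μ₁) * (1 - μ₂) * Q₀ z + (1 - μ₁) * μ₂ * PtA z + μ₁ * PB z) *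
            (Real.log ((1 - μ₁) * (1 - μ₂) * Q₀ z + (1 - μ₁) * μ₂ * PtA z + μ₁ * PB z)
              - Real.log (Q₀ z)) := funext fun μ₁ => hf μ₁ μ₂
      rw [hfun]
      apply HasDerivAt.fun_sum
      intro z _
      set C := (1 - μ₂) * Q₀ z + μ₂ * PtA z with hC
      set D := PB z - C with hD
      have h1 : (fun x : ℝ => (1 - x) * (1 - μ₂) * Q₀ z + (1 - x) * μ₂ * PtA z + x * PB z)
          = fun x => C + x * D := by funext x; simp only [hC, hD]; ring
      have hp : HasDerivAt (fun x : ℝ => (1 - x) * (1 - μ₂) * Q₀ z + (1 - x) * μ₂ * PtA z + x * PB z) D 0 := by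
        rw [h1]
        simpa using ((hasDerivAt_id (0:ℝ)).mul_const D).const_add C
      have hpe : (1 - (0:ℝ)) * (1 - μ₂) * Q₀ z + (1 - (0:ℝ)) * μ₂ * PtA z + 0 * PB z = C := by
        simp only [hC]; ring
      have hlog : HasDerivAt (fun x : ℝ => Real.log ((1 - x) * (1 - μ₂) * Q₀ z + (1 - x) * μ₂ * PtA z + x * PB z)
            - Real.log (Q₀ z)) (D / C) 0 := by
        have := (hp.log (by rw [hpe]; exact (hq z).ne')).sub_const (Real.log (Q₀ z))
        simpa [hpe] using this
      have hmul := hp.mul hlog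
      convert hmul using 1
      case e'_4 => rfl
      case e'_8 => rfl
      rw [hpe]
      have hCne : C ≠ 0 := (hq z).ne'
      have hCD : C * (D / C) = D := by field_simp
      rw [hCD]
      ring
    exact hderiv.deriv
  -- the outer function agrees with an explicit formula near 0
  have hev : (fun μ₂ => deriv (fun μ₁ => f μ₁ μ₂) 0) =ᶠ[nhds (0:ℝ)]
      (fun μ₂ => ∑ z, (PB z - ((1 - μ₂) * Q₀ z + μ₂ * PtA z)) *
          (Real.log ((1 - μ₂) * Q₀ z + μ₂ * PtA z) - Real.log (Q₀ z) + 1)) := by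
    have hpos : ∀ᶠ μ₂ in nhds (0:ℝ), ∀ z, 0 < (1 - μ₂) * Q₀ z + μ₂ * PtA z := by
      rw [Filter.eventually_all]
      intro z
      have hc : ContinuousAt (fun μ₂ : ℝ => (1 - μ₂) * Q₀ z + μ₂ * PtA z) 0 := by fun_prop
      have h0 : (0:ℝ) < (1 - (0:ℝ)) * Q₀ z + 0 * PtA z := by simpa using hQ0pos z
      exact (continuousAt_const (y := (0:ℝ))).eventually_lt hc h0
    filter_upwards [hpos] with μ₂ h using inner μ₂ h
  rw [hev.deriv_eq]
  -- differentiate the explicit formula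
  have hderiv2 : HasDerivAt (fun μ₂ => ∑ z, (PB z - ((1 - μ₂) * Q₀ z + μ₂ * PtA z)) *
        (Real.log ((1 - μ₂) * Q₀ z + μ₂ * PtA z) - Real.log (Q₀ z) + 1))
      (∑ z, ((Q₀ z - PtA z) + (PB z - Q₀ z) * ((PtA z - Q₀ z) / Q₀ z))) 0 := by
    apply HasDerivAt.fun_sum
    intro z _
    have hq1 : (fun μ₂ : ℝ => (1 - μ₂) * Q₀ z + μ₂ * PtA z) = fun μ₂ => Q₀ z + μ₂ * (PtA z - Q₀ z) := by
      funext x; ring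
    have hqd : HasDerivAt (fun μ₂ : ℝ => (1 - μ₂) * Q₀ z + μ₂ * PtA z) (PtA z - Q₀ z) 0 := by
      rw [hq1]; simpa using ((hasDerivAt_id (0:ℝ)).mul_const (PtA z - Q₀ z)).const_add (Q₀ z)
    have hqe : (1 - (0:ℝ)) * Q₀ z + 0 * PtA z = Q₀ z := by ring
    have ha : HasDerivAt (fun μ₂ : ℝ => PB z - ((1 - μ₂) * Q₀ z + μ₂ * PtA z)) (Q₀ z - PtA z) 0 := by
      simpa using (hqd.const_sub (PB z))
    have hlog : HasDerivAt (fun μ₂ : ℝ => Real.log ((1 - μ₂) * Q₀ z + μ₂ * PtA z)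
          - Real.log (Q₀ z) + 1) ((PtA z - Q₀ z) / Q₀ z) 0 := by
      have := ((hqd.log (by rw [hqe]; exact (hQ0pos z).ne')).sub_const (Real.log (Q₀ z))).add_const 1
      simpa [hqe] using this
    have hmul := ha.mul hlog
    convert hmul using 1
    case e'_4 => rfl
    case e'_8 => rfl
    rw [hqe]
    simp
  rw [hderiv2.deriv]
  -- final algebraic simplification
  have hsum : ∑ z, ((Q₀ z - PtA z) + (PB z - Q₀ z) * ((PtA z - Q₀ z) / Q₀ z))
      = ∑ z, (Q₀ z - PtA z) + ∑ z, (PtA z - Q₀ z) * (PB z - Q₀ z) / Q₀ z := by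
    rw [← Finset.sum_add_distrib]
    apply Finset.sum_congr rfl
    intro z _
    field_simp
  rw [hsum]
  have : ∑ z, (Q₀ z - PtA z) = 0 := by
    rw [Finset.sum_sub_distrib, hQ0sum, hPtA1]; ring
  rw [this, zero_add]
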